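/- Under the setup of the discrete-diffusion posterior: let m ∈ ℝ^K be a strictly positive probability vector, ᾱ_s, ᾱ_{t|s} ∈ (0,1), ᾱ_t := ᾱ_s ᾱ_{t|s}, x_0 and x_t one-hot vectors, f ∈ ℝ^K a probability vector. Let v(x_0) := (B x_t ⊙ Aᵀ x_0)/⟨x_t,(AB)ᵀ x_0⟩ with A = ᾱ_s I + (1−ᾱ_s)1mᵀ and B = ᾱ_{t|s} I + (1−ᾱ_{t|s})1mᵀ, and let p := Σ_k v(e_k) f_k. Then p − v(x_0) = (1−μ_{t|s}) [ f − x_0 + φ_{t|s} ⟨f − x_0, x_t⟩ (x_t − m) ], where μ_{t|s} := (1−ᾱ_s)/(1−ᾱ_t) and φ_{t|s} := (1−ᾱ_s) ᾱ_{t|s} / (ᾱ_t + (1−ᾱ_t) ⟨x_t, m⟩). The identity holds both when x_t = x_0 and when x_t ≠ x_0. -/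

import Mathlib

/-- The Bayes posterior vector `v(x0) = (B xt ⊙ Aᵀ x0) / ⟨xt, (AB)ᵀ x0⟩` of the
discrete-diffusion forward chain, with `A = ᾱ_s I + (1-ᾱ_s) 1mᵀ` and
`B = ᾱ_{t|s} I + (1-ᾱ_{t|s}) 1mᵀ`. -/
noncomputable def postVec {K : ℕ} (m : Fin K → ℝ) (as ats : ℝ) (xt x0 : Fin K → ℝ) :
    Fin K → ℝ :=
  fun k =>
    ((ats • (1 : Matrix (Fin K) (Fin K) ℝ) + (1 - ats) • Matrix.vecMulVec (1 : Fin K → ℝ) m).mulVec xt k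
        * (as • (1 : Matrix (Fin K) (Fin K) ℝ) + (1 - as) • Matrix.vecMulVec (1 : Fin K → ℝ) m).transpose.mulVec x0 k)
      / (∑ j, xt j *
          (((as • (1 : Matrix (Fin K) (Fin K) ℝ) + (1 - as) • Matrix.vecMulVec (1 : Fin K → ℝ) m)
            * (ats • (1 : Matrix (Fin K) (Fin K) ℝ) + (1 - ats) • Matrix.vecMulVec (1 : Fin K → ℝ) m)).transpose.mulVec x0) j)

lemma postVec_apply {K : ℕ} (m : Fin K → ℝ) (hm_sum : ∑ k, m k = 1)
    (as ats : ℝ) (it : Fin K) (x0 : Fin K → ℝ) (hx0 : ∑ k, x0 k = 1) (j : Fin K) :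
    postVec m as ats (Pi.single it 1) x0 j =
      ((ats * (if j = it then 1 else 0) + (1 - ats) * m it)
          * (as * x0 j + (1 - as) * m j))
        / (as * ats * x0 it + (1 - as * ats) * m it) := by
  unfold postVec
  simp only [Matrix.mulVec, Matrix.mul_apply, Matrix.transpose_apply, Matrix.add_apply,
    Matrix.smul_apply, Matrix.one_apply, Matrix.vecMulVec_apply, Pi.one_apply, dotProduct,
    smul_eq_mul, one_mul, Pi.single_apply, mul_ite, ite_mul, mul_one, mul_zero, one_mul, zero_mul,
    add_mul, mul_add, Finset.sum_add_distrib, Finset.sum_ite_eq, Finset.sum_ite_eq',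
    Finset.mem_univ, if_true]
  have h1 : ∀ c : ℝ, ∑ x : Fin K, c * x0 x = c := fun c => by
    rw [← Finset.mul_sum, hx0, mul_one]
  have h2 : ∑ x : Fin K, (1 - as) * m x * ((1 - ats) * m it)
      = (1 - as) * ((1 - ats) * m it) := by
    rw [Finset.sum_congr rfl fun x _ => (by ring :
        (1 - as) * m x * ((1 - ats) * m it) = (1 - as) * ((1 - ats) * m it) * m x),
      ← Finset.mul_sum, hm_sum, mul_one]
  simp only [h2, h1]
  congr 1
  ring


set_option maxHeartbeats 1000000 in
/-- Proposition 3: the difference between the marginalized backward probability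
`p = Σ_k v(e_k) f_k` and the true posterior `v(x_0)` satisfies
`p − v(x_0) = (1−μ_{t|s})[f − x_0 + φ_{t|s} ⟨f − x_0, x_t⟩ (x_t − m)]`, where
`μ_{t|s} = (1−ᾱ_s)/(1−ᾱ_t)` and
`φ_{t|s} = (1−ᾱ_s)ᾱ_{t|s} / (ᾱ_t + (1−ᾱ_t)⟨x_t, m⟩)`, both when `x_t = x_0`
and when `x_t ≠ x_0`. -/
theorem backward_minus_posterior_closed_form
    {K : ℕ} (hK : 1 ≤ K) (m : Fin K → ℝ)
    (hm_pos : ∀ k, 0 < m k) (hm_sum : ∑ k, m k = 1)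
    (as ats : ℝ) (has : 0 < as ∧ as < 1) (hats : 0 < ats ∧ ats < 1)
    (x0 xt : Fin K → ℝ)
    (hx0 : ∃ i, x0 = Pi.single i 1) (hxt : ∃ i, xt = Pi.single i 1)
    (f : Fin K → ℝ) (hf_nonneg : ∀ k, 0 ≤ f k) (hf_sum : ∑ k, f k = 1) :
    ∀ j, (∑ k, postVec m as ats xt (Pi.single k 1) j * f k) - postVec m as ats xt x0 j
      = (1 - (1 - as) / (1 - as * ats))
          * (f j - x0 j
            + (1 - as) * ats / (as * ats + (1 - as * ats) * ∑ i, xt i * m i)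
              * (∑ i, (f i - x0 i) * xt i) * (xt j - m j)) := by
  obtain ⟨i0, rfl⟩ := hx0
  obtain ⟨it, rfl⟩ := hxt
  intro j
  have hone : ∀ i : Fin K, ∑ k, (Pi.single i 1 : Fin K → ℝ) k = 1 := fun i => by
    simp [Pi.single_apply]
  -- abbreviations
  set N : ℝ := ats * (if j = it then 1 else 0) + (1 - ats) * m it with hN
  have hD0pos : 0 < (1 - as * ats) * m it := by
    have : as * ats < 1 := by nlinarith [has.1, has.2, hats.1, hats.2]
    exact mul_pos (by linarith) (hm_pos it)
  have hD1pos : 0 < as * ats + (1 - as * ats) * m it := by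
    nlinarith [has.1, hats.1]
  have hasats : (1 : ℝ) - as * ats ≠ 0 := by nlinarith [has.1, has.2, hats.1, hats.2]
  have hD0 : (1 - as * ats) * m it ≠ 0 := ne_of_gt hD0pos
  have hD1 : as * ats + (1 - as * ats) * m it ≠ 0 := ne_of_gt hD1pos
  -- the sum over masses
  have hT : ∑ k, f k / (as * ats * (if it = k then 1 else 0) + (1 - as * ats) * m it)
      = f it / (as * ats + (1 - as * ats) * m it) + (1 - f it) / ((1 - as * ats) * m it) := by
    have hstep : ∀ k : Fin K,
        f k / (as * ats * (if it = k then 1 else 0) + (1 - as * ats) * m it)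
        = f k / ((1 - as * ats) * m it)
          + (if it = k then
              f k / (as * ats + (1 - as * ats) * m it) - f k / ((1 - as * ats) * m it)
            else 0) := by
      intro k
      split_ifs with h
      · rw [mul_one]; ring_nf
      · rw [mul_zero, zero_add, add_zero]
    rw [Finset.sum_congr rfl fun k _ => hstep k, Finset.sum_add_distrib,
      Finset.sum_ite_eq Finset.univ it, if_pos (Finset.mem_univ it), ← Finset.sum_div, hf_sum]
    ring
  -- the main sum
  have hterm : ∀ k : Fin K,
      postVec m as ats (Pi.single it 1) (Pi.single k 1) j * f k
      = (if j = k then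
          N * as * f k / (as * ats * (if it = k then 1 else 0) + (1 - as * ats) * m it)
        else 0)
        + N * ((1 - as) * m j)
          * (f k / (as * ats * (if it = k then 1 else 0) + (1 - as * ats) * m it)) := by
    intro k
    rw [postVec_apply m hm_sum as ats it _ (hone k) j, Pi.single_apply, Pi.single_apply, ← hN]
    split_ifs <;> ring
  have hsum : ∑ k, postVec m as ats (Pi.single it 1) (Pi.single k 1) j * f k
      = N * as * f j / (as * ats * (if it = j then 1 else 0) + (1 - as * ats) * m it)
        + N * ((1 - as) * m j)
          * (f it / (as * ats + (1 - as * ats) * m it) + (1 - f it) / ((1 - as * ats) * m it)) := by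
    rw [Finset.sum_congr rfl fun k _ => hterm k, Finset.sum_add_distrib,
      Finset.sum_ite_eq Finset.univ j, if_pos (Finset.mem_univ j), ← Finset.mul_sum, hT]
  rw [hsum, postVec_apply m hm_sum as ats it _ (hone i0) j]
  have hxm : ∑ i, (Pi.single it 1 : Fin K → ℝ) i * m i = m it := by
    simp [Pi.single_apply, ite_mul]
  have hfx : ∑ i, (f i - (Pi.single i0 1 : Fin K → ℝ) i) * (Pi.single it 1 : Fin K → ℝ) i
      = f it - (if it = i0 then 1 else 0) := by
    simp only [Pi.single_apply, mul_ite, mul_one, mul_zero, Finset.sum_ite_eq',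
      Finset.mem_univ, if_true]
  rw [hxm, hfx]
  simp only [Pi.single_apply, hN, mul_one, mul_zero, add_zero, zero_add]
  by_cases h1 : j = it
  · subst h1
    simp only [if_pos rfl, mul_one, mul_zero, add_zero, zero_add]
    by_cases h3 : j = i0
    · subst h3
      simp only [↓reduceIte, if_pos rfl, mul_one, mul_zero, add_zero, zero_add]
      have hmpos := fun k => (hm_pos k).ne'; have hasats' : (1 : ℝ) - ats * as ≠ 0 := by rwa [mul_comm ats as]
      have hD' : ∀ k, ats * as + m k * (1 - ats * as) ≠ 0 := fun k => ne_of_gt (add_pos (mul_pos hats.1 has.1) (mul_pos (hm_pos k) (by nlinarith [has.1, has.2, hats.1, hats.2])))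
      field_simp [hmpos, hD']
      ring
    · simp only [↓reduceIte, if_neg h3, mul_one, mul_zero, add_zero, zero_add]
      have hmpos := fun k => (hm_pos k).ne'; have hasats' : (1 : ℝ) - ats * as ≠ 0 := by rwa [mul_comm ats as]
      have hD' : ∀ k, ats * as + m k * (1 - ats * as) ≠ 0 := fun k => ne_of_gt (add_pos (mul_pos hats.1 has.1) (mul_pos (hm_pos k) (by nlinarith [has.1, has.2, hats.1, hats.2])))
      field_simp [hmpos, hD']
      ring
  · simp only [if_neg h1, if_neg (fun h : it = j => h1 h.symm), mul_one, mul_zero, add_zero,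
      zero_add]
    by_cases h2 : it = i0
    · subst h2
      simp only [↓reduceIte, if_pos rfl, if_neg h1, mul_one, mul_zero, add_zero, zero_add]
      have hmpos := fun k => (hm_pos k).ne'; have hasats' : (1 : ℝ) - ats * as ≠ 0 := by rwa [mul_comm ats as]
      have hD' : ∀ k, ats * as + m k * (1 - ats * as) ≠ 0 := fun k => ne_of_gt (add_pos (mul_pos hats.1 has.1) (mul_pos (hm_pos k) (by nlinarith [has.1, has.2, hats.1, hats.2])))
      field_simp [hmpos, hD']
      ring
    · by_cases h3 : j = i0
      · subst h3
        simp only [↓reduceIte, if_pos rfl, if_neg h2, mul_one, mul_zero, add_zero, zero_add]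
        have hmpos := fun k => (hm_pos k).ne'; have hasats' : (1 : ℝ) - ats * as ≠ 0 := by rwa [mul_comm ats as]
        have hD' : ∀ k, ats * as + m k * (1 - ats * as) ≠ 0 := fun k => ne_of_gt (add_pos (mul_pos hats.1 has.1) (mul_pos (hm_pos k) (by nlinarith [has.1, has.2, hats.1, hats.2])))
        field_simp [hmpos, hD']
        ring
      · simp only [↓reduceIte, if_neg h2, if_neg h3, mul_one, mul_zero, add_zero, zero_add]
        have hmpos := fun k => (hm_pos k).ne'; have hasats' : (1 : ℝ) - ats * as ≠ 0 := by rwa [mul_comm ats as]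
        have hD' : ∀ k, ats * as + m k * (1 - ats * as) ≠ 0 := fun k => ne_of_gt (add_pos (mul_pos hats.1 has.1) (mul_pos (hm_pos k) (by nlinarith [has.1, has.2, hats.1, hats.2])))
        field_simp [hmpos, hD']
        ring
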